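/- Let σ > 0 and ξ ∈ ℝ, and let f be the exGPD(σ, ξ) density (f(y) = (e^y/σ)(1 + ξ e^y/σ)^(−1/ξ − 1) on its support for ξ ≠ 0, and f(y) = (1/σ) e^(y − e^y/σ) on ℝ for ξ = 0). Then the exGPD has finite moments of all orders: for every natural number n, the function y ↦ |y|^n f(y) is integrable over the support. -/

import Mathlib

open Real MeasureTheory Set

lemma exGPD_L2 {b : ℝ} (hb : 0 < b) (n : ℕ) (c : ℝ) :
    IntegrableOn (fun y : ℝ => |y| ^ n * Real.exp (-(b * y))) (Ici c) := by
  have h0 : IntegrableOn (fun y : ℝ => |y| ^ n * Real.exp (-(b * y))) (Ioi (0:ℝ)) := by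
    have h := integrableOn_rpow_mul_exp_neg_mul_rpow (p := 1) (s := (n : ℝ))
      (lt_of_lt_of_le neg_one_lt_zero (Nat.cast_nonneg n)) one_pos hb
    refine h.congr_fun (fun x hx => ?_) measurableSet_Ioi
    dsimp only
    rw [Real.rpow_one, Real.rpow_natCast, abs_of_pos hx, neg_mul]
  have h1 : IntegrableOn (fun y : ℝ => |y| ^ n * Real.exp (-(b * y))) (Icc c 0) :=
    ((continuous_abs.pow n).mul (((continuous_const.mul continuous_id).neg).rexp)).integrableOn_Icc
  refine (h1.union h0).mono_set fun y hy => ?_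
  rcases le_or_gt y 0 with h | h
  · exact Or.inl ⟨hy, h⟩
  · exact Or.inr h

lemma exGPD_L1 {b : ℝ} (hb : 0 < b) (n : ℕ) (a : ℝ) :
    IntegrableOn (fun y : ℝ => |y| ^ n * Real.exp (b * y)) (Iic a) := by
  rw [← (Measure.measurePreserving_neg (volume : Measure ℝ)).integrableOn_comp_preimage
      (Homeomorph.neg ℝ).measurableEmbedding]
  simp only [Function.comp_def, neg_preimage, neg_Iic, abs_neg, mul_neg]
  exact exGPD_L2 hb n (-a)

lemma exGPD_mono {f g : ℝ → ℝ} {s : Set ℝ} (hs : MeasurableSet s)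
    (hg : IntegrableOn g s) (hf : Measurable f) (h : ∀ y ∈ s, |f y| ≤ g y) :
    IntegrableOn f s :=
  hg.mono' (hf.aestronglyMeasurable.restrict)
    ((ae_restrict_iff' hs).2 (ae_of_all _ fun y hy => by
      rw [Real.norm_eq_abs]; exact h y hy))

lemma exGPD_case_zero (σ : ℝ) (hσ : 0 < σ) (n : ℕ)
    (hm : Measurable fun y : ℝ => |y| ^ n * ((1 / σ) * Real.exp (y - Real.exp y / σ))) :
    IntegrableOn (fun y : ℝ => |y| ^ n * ((1 / σ) * Real.exp (y - Real.exp y / σ)))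
      (univ : Set ℝ) := by
  rw [← Iic_union_Ioi (a := (0:ℝ))]
  apply IntegrableOn.union
  · refine exGPD_mono measurableSet_Iic (((exGPD_L1 one_pos n 0).const_mul (1/σ))) hm
      fun y hy => ?_
    have h1 : Real.exp (y - Real.exp y / σ) ≤ Real.exp (1 * y) := by
      apply Real.exp_le_exp.2
      have := (Real.exp_pos y).le
      have : 0 ≤ Real.exp y / σ := by positivity
      linarith
    rw [abs_of_nonneg (by positivity)]
    calc |y| ^ n * (1 / σ * Real.exp (y - Real.exp y / σ))
        ≤ |y| ^ n * (1 / σ * Real.exp (1 * y)) := by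
          apply mul_le_mul_of_nonneg_left _ (by positivity)
          exact mul_le_mul_of_nonneg_left h1 (by positivity)
      _ = 1 / σ * (|y| ^ n * Real.exp (1 * y)) := by ring
  · have h' : IntegrableOn (fun y : ℝ => Real.exp (4*σ)/σ * (|y| ^ n * Real.exp (-(1 * y))))
        (Ici (0:ℝ)) := (exGPD_L2 one_pos n 0).const_mul (Real.exp (4 * σ) / σ)
    have hIci := h'.mono_set Ioi_subset_Ici_self
    refine exGPD_mono measurableSet_Ioi hIci hm fun y hy => ?_
    have hy0 : (0:ℝ) < y := hy
    have hsq : (y / 2 + 1) ^ 2 ≤ Real.exp y := by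
      have h1 : y / 2 + 1 ≤ Real.exp (y / 2) := Real.add_one_le_exp _
      have h2 : Real.exp (y/2) * Real.exp (y/2) = Real.exp y := by
        rw [← Real.exp_add]; ring_nf
      nlinarith [Real.exp_pos (y/2)]
    have key : y - Real.exp y / σ ≤ 4 * σ + -(1 * y) := by
      have h3 : (2 * y - 4 * σ) * σ ≤ Real.exp y := by nlinarith [sq_nonneg (y - 4 * σ)]
      have h4 : 2 * y - 4 * σ ≤ Real.exp y / σ := by rw [le_div_iff₀ hσ]; linarith
      linarith
    have h1 : Real.exp (y - Real.exp y / σ) ≤ Real.exp (4*σ) * Real.exp (-(1 * y)) := by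
      rw [← Real.exp_add]; exact Real.exp_le_exp.2 key
    rw [abs_of_nonneg (by positivity)]
    calc |y| ^ n * (1 / σ * Real.exp (y - Real.exp y / σ))
        ≤ |y| ^ n * (1 / σ * (Real.exp (4*σ) * Real.exp (-(1 * y)))) := by
          apply mul_le_mul_of_nonneg_left _ (by positivity)
          exact mul_le_mul_of_nonneg_left h1 (by positivity)
      _ = Real.exp (4*σ) / σ * (|y| ^ n * Real.exp (-(1 * y))) := by ring

lemma exGPD_case_pos (σ ξ : ℝ) (hσ : 0 < σ) (hξ : 0 < ξ) (n : ℕ)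
    (hm : Measurable fun y : ℝ =>
      |y| ^ n * ((Real.exp y / σ) * (1 + ξ * Real.exp y / σ) ^ (-1 / ξ - 1))) :
    IntegrableOn (fun y : ℝ =>
      |y| ^ n * ((Real.exp y / σ) * (1 + ξ * Real.exp y / σ) ^ (-1 / ξ - 1)))
      (univ : Set ℝ) := by
  set α : ℝ := -1 / ξ - 1 with hα
  have hαneg : α ≤ 0 := by
    have : 0 < 1 / ξ := by positivity
    rw [hα]; rw [neg_div]; linarith
  have hBpos : ∀ y : ℝ, 0 < 1 + ξ * Real.exp y / σ := fun y => by positivity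
  rw [← Iic_union_Ioi (a := (0:ℝ))]
  apply IntegrableOn.union
  · refine exGPD_mono measurableSet_Iic ((exGPD_L1 one_pos n 0).const_mul (1/σ)) hm
      fun y hy => ?_
    have h1 : (1 + ξ * Real.exp y / σ) ^ α ≤ 1 :=
      Real.rpow_le_one_of_one_le_of_nonpos
        (by have : 0 < ξ * Real.exp y / σ := by positivity
            linarith) hαneg
    rw [abs_of_nonneg (by positivity)]
    calc |y| ^ n * (Real.exp y / σ * (1 + ξ * Real.exp y / σ) ^ α)
        ≤ |y| ^ n * (Real.exp y / σ * 1) := by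
          apply mul_le_mul_of_nonneg_left _ (by positivity)
          exact mul_le_mul_of_nonneg_left h1 (by positivity)
      _ = 1 / σ * (|y| ^ n * Real.exp (1 * y)) := by rw [one_mul]; ring
  · have hb : (0:ℝ) < 1 / ξ := by positivity
    have h' : IntegrableOn
        (fun y : ℝ => (ξ/σ) ^ α / σ * (|y| ^ n * Real.exp (-(1/ξ * y)))) (Ici (0:ℝ)) :=
      (exGPD_L2 hb n 0).const_mul _
    refine exGPD_mono measurableSet_Ioi (h'.mono_set Ioi_subset_Ici_self) hm fun y hy => ?_
    have hE := Real.exp_pos y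
    have hstep : (1 + ξ * Real.exp y / σ) ^ α ≤ (ξ/σ) ^ α * Real.exp (y * α) := by
      have h2 : (ξ/σ) * Real.exp y ≤ 1 + ξ * Real.exp y / σ := by
        have : (ξ/σ) * Real.exp y = ξ * Real.exp y / σ := by ring
        rw [this]; linarith
    
      calc (1 + ξ * Real.exp y / σ) ^ α
          ≤ ((ξ/σ) * Real.exp y) ^ α :=
            Real.rpow_le_rpow_of_nonpos (by positivity) h2 hαneg
        _ = (ξ/σ) ^ α * (Real.exp y) ^ α :=
            Real.mul_rpow (by positivity) hE.le
        _ = (ξ/σ) ^ α * Real.exp (y * α) := by rw [← Real.exp_mul]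
    rw [abs_of_nonneg (by positivity)]
    have hfin : Real.exp y * Real.exp (y * α) = Real.exp (-(1/ξ * y)) := by
      rw [← Real.exp_add]
      congr 1
      have hξ0 : ξ ≠ 0 := ne_of_gt hξ
      rw [hα]
      field_simp
      ring
    calc |y| ^ n * (Real.exp y / σ * (1 + ξ * Real.exp y / σ) ^ α)
        ≤ |y| ^ n * (Real.exp y / σ * ((ξ/σ) ^ α * Real.exp (y * α))) := by
          apply mul_le_mul_of_nonneg_left _ (by positivity)
          exact mul_le_mul_of_nonneg_left hstep (by positivity)
      _ = (ξ/σ) ^ α / σ * (|y| ^ n * (Real.exp y * Real.exp (y * α))) := by ring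
      _ = (ξ/σ) ^ α / σ * (|y| ^ n * Real.exp (-(1/ξ * y))) := by rw [hfin]

lemma exGPD_case_neg (σ ξ : ℝ) (hσ : 0 < σ) (hξ : ξ < 0) (n : ℕ)
    (hm : Measurable fun y : ℝ =>
      |y| ^ n * ((Real.exp y / σ) * (1 + ξ * Real.exp y / σ) ^ (-1 / ξ - 1))) :
    IntegrableOn (fun y : ℝ =>
      |y| ^ n * ((Real.exp y / σ) * (1 + ξ * Real.exp y / σ) ^ (-1 / ξ - 1)))
      (Iic (Real.log (-σ / ξ))) := by
  have hξ0 : ξ ≠ 0 := ne_of_lt hξ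
  set α : ℝ := -1 / ξ - 1 with hα
  set M : ℝ := Real.log (-σ / ξ) with hMdef
  have hMpos : (0:ℝ) < -σ / ξ := by
    rw [show -σ / ξ = σ / (-ξ) by ring]
    exact div_pos hσ (neg_pos.2 hξ)
  have hM : Real.exp M = -σ / ξ := Real.exp_log hMpos
  have hbase : ∀ y : ℝ, 1 + ξ * Real.exp y / σ = 1 - Real.exp (y - M) := by
    intro y
    rw [Real.exp_sub, hM]
    rw [div_div_eq_mul_div, div_neg, div_eq_mul_inv, sub_neg_eq_add]
    congr 1
    rw [div_eq_mul_inv]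
    ring
  have hαgt : (-1:ℝ) < α := by
    have h1 : (0:ℝ) < -1 / ξ := by
      rw [show (-1 : ℝ) / ξ = 1 / (-ξ) by ring]
      exact div_pos one_pos (neg_pos.2 hξ)
    rw [hα]; linarith
  have hb_nonneg : ∀ y ∈ Iic M, 0 ≤ 1 - Real.exp (y - M) := fun y hy => by
    have : Real.exp (y - M) ≤ 1 := Real.exp_le_one_iff.2 (by have := mem_Iic.1 hy; linarith)
    linarith
  have hb_le_one : ∀ y : ℝ, 1 - Real.exp (y - M) ≤ 1 := fun y => by
    have := (Real.exp_pos (y - M)).le; linarith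
  by_cases hα0 : 0 ≤ α
  · -- easy subcase: exponent nonneg
    refine exGPD_mono measurableSet_Iic ((exGPD_L1 one_pos n M).const_mul (1/σ)) hm
      fun y hy => ?_
    have h1 : (1 + ξ * Real.exp y / σ) ^ α ≤ 1 := by
      rw [hbase y]
      exact Real.rpow_le_one (hb_nonneg y hy) (hb_le_one y) hα0
    have hbn : 0 ≤ 1 + ξ * Real.exp y / σ := by rw [hbase y]; exact hb_nonneg y hy
    rw [abs_of_nonneg (mul_nonneg (by positivity)
      (mul_nonneg (by positivity) (Real.rpow_nonneg hbn α)))]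
    calc |y| ^ n * (Real.exp y / σ * (1 + ξ * Real.exp y / σ) ^ α)
        ≤ |y| ^ n * (Real.exp y / σ * 1) := by
          apply mul_le_mul_of_nonneg_left _ (by positivity)
          exact mul_le_mul_of_nonneg_left h1 (by positivity)
      _ = 1 / σ * (|y| ^ n * Real.exp (1 * y)) := by rw [one_mul]; ring
  · push_neg at hα0
    rw [← Iic_union_Ioc_eq_Iic (show M - 1 ≤ M by linarith)]
    apply IntegrableOn.union
    · -- on Iic (M-1): base bounded below by 1 - exp(-1)
      have hc0 : (0:ℝ) < 1 - Real.exp (-1) := by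
        have : Real.exp (-1:ℝ) < Real.exp 0 := Real.exp_lt_exp.2 (by norm_num)
        rw [Real.exp_zero] at this; linarith
      refine exGPD_mono measurableSet_Iic
        ((exGPD_L1 one_pos n (M-1)).const_mul ((1 - Real.exp (-1)) ^ α / σ)) hm
        fun y hy => ?_
      have hy' : y ≤ M - 1 := hy
      have h2 : 1 - Real.exp (-1) ≤ 1 - Real.exp (y - M) := by
        have : Real.exp (y - M) ≤ Real.exp (-1) := Real.exp_le_exp.2 (by linarith)
        linarith
      have h1 : (1 + ξ * Real.exp y / σ) ^ α ≤ (1 - Real.exp (-1)) ^ α := by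
        rw [hbase y]
        exact Real.rpow_le_rpow_of_nonpos hc0 h2 hα0.le
      have hbn : 0 ≤ 1 + ξ * Real.exp y / σ := by
        rw [hbase y]; exact hb_nonneg y (mem_Iic.2 (by linarith))
      rw [abs_of_nonneg (mul_nonneg (by positivity)
        (mul_nonneg (by positivity) (Real.rpow_nonneg hbn α)))]
      calc |y| ^ n * (Real.exp y / σ * (1 + ξ * Real.exp y / σ) ^ α)
          ≤ |y| ^ n * (Real.exp y / σ * (1 - Real.exp (-1)) ^ α) := by
            apply mul_le_mul_of_nonneg_left _ (by positivity)
            exact mul_le_mul_of_nonneg_left h1 (by positivity)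
        _ = (1 - Real.exp (-1)) ^ α / σ * (|y| ^ n * Real.exp (1 * y)) := by
            rw [one_mul]; ring
    · -- on Ioc (M-1) M : compare with (M - y)^α
      set C : ℝ := (|M| + 1) ^ n * (Real.exp M / σ) * (Real.exp (-1:ℝ)) ^ α with hC
      have hg : IntegrableOn (fun y : ℝ => C * (M - y) ^ α) (Ioc (M - 1) M) := by
        have hi : IntervalIntegrable (fun x : ℝ => x ^ α) volume 0 1 :=
          intervalIntegral.intervalIntegrable_rpow' hαgt
        have hi2 := (hi.comp_sub_left M).symm
        have hi3 : IntegrableOn (fun x : ℝ => (M - x) ^ α) (Ioc (M - 1) M) :=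
          (intervalIntegrable_iff_integrableOn_Ioc_of_le
            (show M - 1 ≤ M by linarith)).1 (by simpa using hi2)
        exact hi3.const_mul C
      refine exGPD_mono measurableSet_Ioc hg hm fun y hy => ?_
      obtain ⟨hy1, hy2⟩ := hy
      set u : ℝ := M - y with hu
      have hu0 : 0 ≤ u := by rw [hu]; linarith
      have hu1 : u ≤ 1 := by rw [hu]; linarith
      have hyM : y - M = -u := by rw [hu]; ring
      have hblow : u * Real.exp (-1) ≤ 1 - Real.exp (y - M) := by
        rw [hyM]
        have e1 : u + 1 ≤ Real.exp u := Real.add_one_le_exp u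
        have e2 : Real.exp (-1:ℝ) ≤ Real.exp (-u) := Real.exp_le_exp.2 (by linarith)
        have e3 : Real.exp u * Real.exp (-u) = 1 := by
          rw [← Real.exp_add]; simp
        nlinarith [(Real.exp_pos (-u)).le, (Real.exp_pos u).le]
      have hrpow : (1 + ξ * Real.exp y / σ) ^ α ≤ (M - y) ^ α * (Real.exp (-1:ℝ)) ^ α := by
        rw [hbase y]
        rcases eq_or_lt_of_le hy2 with heq | hlt
        · rw [heq]
          simp only [sub_self, Real.exp_zero, sub_self]
          rw [Real.zero_rpow (by linarith : α ≠ 0)]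
          positivity
        · have hupos : 0 < u := by rw [hu]; linarith
          calc (1 - Real.exp (y - M)) ^ α ≤ (u * Real.exp (-1:ℝ)) ^ α :=
              Real.rpow_le_rpow_of_nonpos (by positivity) hblow hα0.le
            _ = u ^ α * (Real.exp (-1:ℝ)) ^ α :=
              Real.mul_rpow hu0 (Real.exp_pos _).le
            _ = (M - y) ^ α * (Real.exp (-1:ℝ)) ^ α := by rw [hu]
      have hbn : 0 ≤ 1 + ξ * Real.exp y / σ := by
        rw [hbase y]; exact hb_nonneg y (mem_Iic.2 (by linarith))
      have hyabs : |y| ≤ |M| + 1 := by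
        rw [abs_le]
        constructor
        · have := neg_abs_le M; linarith
        · have := le_abs_self M; linarith
      rw [abs_of_nonneg (mul_nonneg (by positivity)
        (mul_nonneg (by positivity) (Real.rpow_nonneg hbn α)))]
      have hMy : (0:ℝ) ≤ (M - y) ^ α := Real.rpow_nonneg hu0 α
      have hexp : Real.exp y / σ ≤ Real.exp M / σ :=
        div_le_div_of_nonneg_right (Real.exp_le_exp.2 hy2) hσ.le
      calc |y| ^ n * (Real.exp y / σ * (1 + ξ * Real.exp y / σ) ^ α)
          ≤ (|M| + 1) ^ n * (Real.exp M / σ * ((M - y) ^ α * (Real.exp (-1:ℝ)) ^ α)) := by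
            apply mul_le_mul (pow_le_pow_left₀ (abs_nonneg y) hyabs n)
              (mul_le_mul hexp hrpow (Real.rpow_nonneg hbn α) (by positivity))
              (mul_nonneg (by positivity) (Real.rpow_nonneg hbn α)) (by positivity)
        _ = C * (M - y) ^ α := by rw [hC]; ring

/-- The density of exGPD(σ, ξ). -/
noncomputable def exGPDpdf (σ ξ y : ℝ) : ℝ :=
  if ξ = 0 then (1 / σ) * Real.exp (y - Real.exp y / σ)
  else (Real.exp y / σ) * (1 + ξ * Real.exp y / σ) ^ (-1 / ξ - 1)

/-- The support of exGPD(σ, ξ): all of ℝ for ξ ≥ 0, and (−∞, log(−σ/ξ)] for ξ < 0. -/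
noncomputable def exGPDsupp (σ ξ : ℝ) : Set ℝ :=
  if ξ < 0 then Set.Iic (Real.log (-σ / ξ)) else Set.univ

/-- The exGPD(σ, ξ) distribution has finite moments of all orders: for every `n`,
`y ↦ |y|^n f(y)` is integrable over the support. -/
theorem exGPD_all_moments_finite (σ ξ : ℝ) (hσ : 0 < σ) (n : ℕ) :
    MeasureTheory.IntegrableOn (fun y => |y| ^ n * exGPDpdf σ ξ y) (exGPDsupp σ ξ) := by
  rcases lt_trichotomy ξ 0 with hξ | hξ | hξ
  · simp only [exGPDsupp, if_pos hξ, exGPDpdf, if_neg (ne_of_lt hξ)]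
    exact exGPD_case_neg σ ξ hσ hξ n (by fun_prop)
  · subst hξ
    simp only [exGPDsupp, if_neg (lt_irrefl (0:ℝ)), exGPDpdf, if_pos rfl]
    exact exGPD_case_zero σ hσ n (by fun_prop)
  · simp only [exGPDsupp, if_neg (not_lt.2 hξ.le), exGPDpdf, if_neg (ne_of_gt hξ)]
    exact exGPD_case_pos σ ξ hσ hξ n (by fun_prop)
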